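/- Let F be analytic on the closed disk {λ : |λ − iω| ≤ R₁} and write F(λ) = F(iω) + (λ − iω)F′(iω) + (λ − iω)²ρ(λ) with ρ analytic and |ρ| ≤ M on this disk, where F′(iω) ≠ 0. Set λ* = iω − F(iω)/F′(iω), c = |F(iω)/F′(iω)|, b = √(|F′(iω)|/(4M)). Assume 0 < M < |F′(iω)|²/(4|F(iω)|) and that R > 0 satisfies √R ∈ (b − √(b²−c), b + √(b²−c)) and the closed disk {|λ − λ*| ≤ R} is contained in {|λ − iω| ≤ R₁}. Then F has exactly one zero (counted with multiplicity) in the open disk {λ : |λ − λ*| < R}. -/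

import Mathlib

open Complex Metric

open Set Filter
open scoped Topology

noncomputable section
namespace Stmt3Aux

def moeb (a z : ℂ) : ℂ := (z - a) / (1 - (starRingEnd ℂ) a * z)

lemma moeb_def (a z : ℂ) : moeb a z = (z - a) / (1 - (starRingEnd ℂ) a * z) := rfl

lemma denom_ne {a z : ℂ} (h : ‖a‖ * ‖z‖ < 1) :
    (1 : ℂ) - (starRingEnd ℂ) a * z ≠ 0 := by
  intro h0
  rw [sub_eq_zero] at h0
  have : ‖(starRingEnd ℂ) a * z‖ = 1 := by rw [← h0]; simp
  rw [norm_mul, Complex.norm_conj] at this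
  linarith

lemma normSq_identity (a z : ℂ) :
    Complex.normSq (1 - (starRingEnd ℂ) a * z) - Complex.normSq (z - a)
      = (1 - Complex.normSq a) * (1 - Complex.normSq z) := by
  have h : ((Complex.normSq (1 - (starRingEnd ℂ) a * z) : ℂ)) - (Complex.normSq (z - a) : ℂ)
      = ((1 - Complex.normSq a : ℂ)) * ((1 - Complex.normSq z : ℂ)) := by
    rw [← Complex.mul_conj, ← Complex.mul_conj, ← Complex.mul_conj, ← Complex.mul_conj]
    simp only [map_sub, map_mul, map_one, Complex.conj_conj]
    ring
  exact_mod_cast h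

lemma normSq_lt_one {z : ℂ} (hz : ‖z‖ < 1) : Complex.normSq z < 1 := by
  rw [← Complex.sq_norm]; nlinarith [norm_nonneg z]

lemma abs_moeb_lt_one {a z : ℂ} (ha : ‖a‖ < 1) (hz : ‖z‖ < 1) :
    ‖moeb a z‖ < 1 := by
  have hm : ‖a‖ * ‖z‖ < 1 := by
    nlinarith [norm_nonneg a, norm_nonneg z]
  have hd := denom_ne hm
  have hid := normSq_identity a z
  have h1 : Complex.normSq (z - a) < Complex.normSq (1 - (starRingEnd ℂ) a * z) := by
    nlinarith [normSq_lt_one ha, normSq_lt_one hz]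
  have h2 : ‖z - a‖ < ‖1 - (starRingEnd ℂ) a * z‖ := by
    rw [Complex.norm_def, Complex.norm_def]
    exact Real.sqrt_lt_sqrt (Complex.normSq_nonneg _) h1
  rw [moeb, norm_div, div_lt_one (norm_pos_iff.mpr hd)]
  exact h2

/-- the compression constant -/
def kk (k : ℝ) : ℝ := Real.sqrt (1 - (1 - k^2)^2/(1 + k^2)^2)

lemma kk_nonneg (k : ℝ) : 0 ≤ kk k := Real.sqrt_nonneg _

lemma kk_arg_nonneg (k : ℝ) : 0 ≤ 1 - (1 - k^2)^2/(1 + k^2)^2 := by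
  have h : (1 - k^2)^2/(1 + k^2)^2 ≤ 1 := by
    rw [div_le_one (by positivity)]
    nlinarith [sq_nonneg k]
  linarith

lemma kk_lt_one {k : ℝ} (hk0 : 0 ≤ k) (hk1 : k < 1) : kk k < 1 := by
  have h1 : (0:ℝ) < (1 - k^2)^2/(1 + k^2)^2 := by
    have : (0:ℝ) < 1 - k^2 := by nlinarith
    positivity
  have : kk k < Real.sqrt 1 := Real.sqrt_lt_sqrt (kk_arg_nonneg k) (by linarith)
  simpa using this

lemma abs_moeb_le {k : ℝ} (hk0 : 0 ≤ k) (hk1 : k < 1) {a z : ℂ}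
    (ha : ‖a‖ ≤ k) (hz : ‖z‖ ≤ k) :
    ‖moeb a z‖ ≤ kk k := by
  have hm : ‖a‖ * ‖z‖ < 1 := by
    nlinarith [norm_nonneg a, norm_nonneg z]
  have hd := denom_ne hm
  have hid := normSq_identity a z
  have hka : Complex.normSq a ≤ k^2 := by
    rw [← Complex.sq_norm]; nlinarith [norm_nonneg a]
  have hkz : Complex.normSq z ≤ k^2 := by
    rw [← Complex.sq_norm]; nlinarith [norm_nonneg z]
  have hden_le : ‖1 - (starRingEnd ℂ) a * z‖ ≤ 1 + k^2 := by
    calc ‖1 - (starRingEnd ℂ) a * z‖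
        = ‖1 + -((starRingEnd ℂ) a * z)‖ := by rw [sub_eq_add_neg]
      _ ≤ ‖1‖ + ‖-((starRingEnd ℂ) a * z)‖ := norm_add_le _ _
      _ ≤ 1 + k^2 := by
          rw [norm_one, norm_neg, norm_mul, Complex.norm_conj]
          nlinarith [norm_nonneg a, norm_nonneg z]
  have hden_pos : 0 < Complex.normSq (1 - (starRingEnd ℂ) a * z) :=
    Complex.normSq_pos.2 hd
  set P : ℝ := (1 - k^2)^2/(1 + k^2)^2 with hPdef
  have hP0 : 0 ≤ P := by positivity
  have hP : P * (1 + k^2)^2 = (1 - k^2)^2 := by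
    rw [hPdef]; field_simp
  have hsq : (‖moeb a z‖)^2 ≤ 1 - P := by
    rw [moeb, norm_div, div_pow, Complex.sq_norm, Complex.sq_norm]
    rw [div_le_iff₀ hden_pos]
    have h1 : (1 - k^2) * (1 - k^2) ≤ (1 - Complex.normSq a) * (1 - Complex.normSq z) := by
      have e : (0:ℝ) ≤ 1 - k^2 := by nlinarith
      nlinarith
    have h2 : Complex.normSq (1 - (starRingEnd ℂ) a * z) ≤ (1 + k^2)^2 := by
      have e := Complex.sq_norm (1 - (starRingEnd ℂ) a * z)
      nlinarith [norm_nonneg (1 - (starRingEnd ℂ) a * z)]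
    nlinarith [mul_le_mul_of_nonneg_left h2 hP0]
  have harg : (0:ℝ) ≤ 1 - P := le_trans (sq_nonneg _) hsq
  rw [kk]
  exact (Real.le_sqrt (norm_nonneg (moeb a z)) harg).mpr hsq

lemma moeb_self (a : ℂ) : moeb a a = 0 := by simp [moeb]

lemma moeb_inv {a z : ℂ} (ha : ‖a‖ < 1) (hz : ‖z‖ < 1) :
    moeb (-a) (moeb a z) = z := by
  have hm : ‖a‖ * ‖z‖ < 1 := by
    nlinarith [norm_nonneg a, norm_nonneg z]
  have hd := denom_ne hm
  have haa : (1:ℂ) - (starRingEnd ℂ) a * a ≠ 0 := by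
    apply denom_ne; nlinarith [norm_nonneg a]
  have haa' : (1:ℂ) - a * (starRingEnd ℂ) a ≠ 0 := by
    rw [mul_comm]; exact haa
  rw [moeb, moeb]
  rw [map_neg, sub_neg_eq_add]
  have hnum : (z - a) / (1 - (starRingEnd ℂ) a * z) + a
      = z * (1 - (starRingEnd ℂ) a * a) / (1 - (starRingEnd ℂ) a * z) := by
    rw [eq_div_iff hd, add_mul, div_mul_cancel₀ _ hd]; ring
  have hden : (1:ℂ) - -(starRingEnd ℂ) a * ((z - a) / (1 - (starRingEnd ℂ) a * z))
      = (1 - (starRingEnd ℂ) a * a) / (1 - (starRingEnd ℂ) a * z) := by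
    rw [eq_div_iff hd, sub_mul, mul_div_assoc', div_mul_cancel₀ _ hd]; ring
  rw [hnum, hden, div_div_div_cancel_right₀ hd, mul_div_assoc, div_self haa, mul_one]

lemma sub_eq_moeb_mul {a z : ℂ} (h : (1:ℂ) - (starRingEnd ℂ) a * z ≠ 0) :
    z - a = moeb a z * (1 - (starRingEnd ℂ) a * z) := by
  rw [moeb, div_mul_cancel₀ _ h]



def qq (k : ℝ) : ℝ := (1 + kk k) / 2

lemma qq_nonneg (k : ℝ) : 0 ≤ qq k := by
  have := kk_nonneg k; rw [qq]; linarith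

lemma kk_lt_qq {k : ℝ} (hk0 : 0 ≤ k) (hk1 : k < 1) : kk k < qq k := by
  have := kk_lt_one hk0 hk1; rw [qq]; linarith

lemma qq_lt_one {k : ℝ} (hk0 : 0 ≤ k) (hk1 : k < 1) : qq k < 1 := by
  have := kk_lt_one hk0 hk1; have := kk_nonneg k; rw [qq]; linarith

lemma mem_ball_abs {w : ℂ} {r : ℝ} : w ∈ ball (0:ℂ) r ↔ ‖w‖ < r := by
  simp [Metric.mem_ball, Complex.dist_eq]

lemma schwarzPick {f : ℂ → ℂ} {k : ℝ} (hk0 : 0 ≤ k) (hk1 : k < 1)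
    (hd : DifferentiableOn ℂ f (ball 0 1))
    (hmap : ∀ w ∈ ball (0:ℂ) 1, ‖f w‖ ≤ k)
    {x y : ℂ} (hx : ‖x‖ ≤ k) (hy : ‖y‖ < 1) :
    ‖moeb (f x) (f y)‖ ≤ qq k * ‖moeb x y‖ := by
  have hx1 : ‖x‖ < 1 := lt_of_le_of_lt hx hk1
  set g : ℂ → ℂ := fun w => moeb (f x) (f (moeb (-x) w)) with hgdef
  have hmx : ∀ w : ℂ, ‖w‖ < 1 → ‖moeb (-x) w‖ < 1 := by
    intro w hw
    exact abs_moeb_lt_one (by simpa using hx1) hw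
  have hg0 : g 0 = 0 := by
    have h0 : moeb (-x) 0 = x := by
      rw [moeb_def]; simp
    rw [hgdef]; simp only [h0]
    exact moeb_self _
  have hfx : ‖f x‖ ≤ k := hmap x (mem_ball_abs.mpr hx1)
  have hgd : DifferentiableOn ℂ g (ball 0 1) := by
    intro w hw
    apply DifferentiableAt.differentiableWithinAt
    have hw1 : ‖w‖ < 1 := mem_ball_abs.mp hw
    have hv1 : ‖moeb (-x) w‖ < 1 := hmx w hw1
    have hfv : ‖f (moeb (-x) w)‖ ≤ k := hmap _ (mem_ball_abs.mpr hv1)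
    have d1 : DifferentiableAt ℂ (fun w : ℂ => moeb (-x) w) w := by
      have : (fun w : ℂ => moeb (-x) w)
          = fun w : ℂ => (w - (-x)) / (1 - (starRingEnd ℂ) (-x) * w) := by
        funext w; rw [moeb_def]
      rw [this]
      apply DifferentiableAt.div
      · fun_prop
      · fun_prop
      · exact denom_ne (by
          rw [norm_neg]
          nlinarith [norm_nonneg x, norm_nonneg w])
    have d2 : DifferentiableAt ℂ f (moeb (-x) w) :=
      hd.differentiableAt (isOpen_ball.mem_nhds (mem_ball_abs.mpr hv1))
    have d3 : DifferentiableAt ℂ (fun u : ℂ => moeb (f x) u) (f (moeb (-x) w)) := by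
      have : (fun u : ℂ => moeb (f x) u)
          = fun u : ℂ => (u - f x) / (1 - (starRingEnd ℂ) (f x) * u) := by
        funext u; rw [moeb_def]
      rw [this]
      apply DifferentiableAt.div
      · fun_prop
      · fun_prop
      · exact denom_ne (by nlinarith [norm_nonneg (f x),
          (norm_nonneg (f (moeb (-x) w)))])
    exact DifferentiableAt.comp w d3 (DifferentiableAt.comp w d2 d1)
  have hgmap : MapsTo g (ball (0:ℂ) 1) (ball (g 0) (qq k)) := by
    intro w hw
    rw [hg0]
    have hw1 : ‖w‖ < 1 := mem_ball_abs.mp hw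
    have hv1 : ‖moeb (-x) w‖ < 1 := hmx w hw1
    have hfv : ‖f (moeb (-x) w)‖ ≤ k := hmap _ (mem_ball_abs.mpr hv1)
    apply mem_ball_abs.mpr
    calc ‖g w‖ ≤ kk k := abs_moeb_le hk0 hk1 hfx hfv
      _ < qq k := kk_lt_qq hk0 hk1
  have hmxy : moeb x y ∈ ball (0:ℂ) 1 := mem_ball_abs.mpr (abs_moeb_lt_one hx1 hy)
  have := Complex.dist_le_div_mul_dist_of_mapsTo_ball hgd (hgmap.mono_right ball_subset_closedBall) hmxy
  rw [hg0] at this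
  have hgxy : g (moeb x y) = moeb (f x) (f y) := by
    rw [hgdef]; simp only [moeb_inv hx1 hy]
  rw [hgxy] at this
  simpa [Complex.dist_eq] using this



lemma abs_one_sub_mul_le {k : ℝ} (hk1 : k ≤ 1) {a z : ℂ}
    (ha : ‖a‖ ≤ k) (hz : ‖z‖ ≤ k) :
    ‖1 - (starRingEnd ℂ) a * z‖ ≤ 2 := by
  calc ‖1 - (starRingEnd ℂ) a * z‖
      = ‖1 + -((starRingEnd ℂ) a * z)‖ := by rw [sub_eq_add_neg]
    _ ≤ ‖1‖ + ‖-((starRingEnd ℂ) a * z)‖ := norm_add_le _ _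
    _ ≤ 2 := by
        rw [norm_one, norm_neg, norm_mul, Complex.norm_conj]
        nlinarith [norm_nonneg a, norm_nonneg z]

theorem diskFixedPoint {f : ℂ → ℂ} {k : ℝ} (hk0 : 0 ≤ k) (hk1 : k < 1)
    (hd : DifferentiableOn ℂ f (ball 0 1))
    (hmap : ∀ w ∈ ball (0:ℂ) 1, ‖f w‖ ≤ k) :
    ∃ a : ℂ, ‖a‖ ≤ k ∧ f a = a ∧ ‖deriv f a‖ < 1 ∧
      ∀ w, ‖w‖ < 1 → f w = w → w = a := by
  -- the iteration sequence
  set u : ℕ → ℂ := fun n => f^[n] 0 with hudef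
  have hu : ∀ n, u (n + 1) = f (u n) := by
    intro n; rw [hudef]; simp [Function.iterate_succ_apply']
  have hub : ∀ n, ‖u n‖ ≤ k := by
    intro n
    induction n with
    | zero => simpa [hudef] using hk0
    | succ n ih =>
        rw [hu n]
        exact hmap _ (mem_ball_abs.mpr (lt_of_le_of_lt ih hk1))
  have hgeo : ∀ n, ‖moeb (u n) (u (n + 1))‖
      ≤ qq k ^ n * ‖moeb (u 0) (u 1)‖ := by
    intro n
    induction n with
    | zero => simp
    | succ n ih =>
        have hstep := schwarzPick hk0 hk1 hd hmap (hub n)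
          (lt_of_le_of_lt (hub (n + 1)) hk1)
        rw [← hu n, ← hu (n + 1)] at hstep
        calc ‖moeb (u (n + 1)) (u (n + 2))‖
            ≤ qq k * ‖moeb (u n) (u (n + 1))‖ := hstep
          _ ≤ qq k * (qq k ^ n * ‖moeb (u 0) (u 1)‖) :=
              mul_le_mul_of_nonneg_left ih (qq_nonneg k)
          _ = qq k ^ (n + 1) * ‖moeb (u 0) (u 1)‖ := by ring
  have hdist : ∀ n, dist (u n) (u (n + 1))
      ≤ (2 * ‖moeb (u 0) (u 1)‖) * qq k ^ n := by
    intro n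
    have hne : (1:ℂ) - (starRingEnd ℂ) (u n) * u (n + 1) ≠ 0 := by
      apply denom_ne
      nlinarith [hub n, hub (n + 1), norm_nonneg (u n), norm_nonneg (u (n+1))]
    have := sub_eq_moeb_mul hne
    calc dist (u n) (u (n + 1)) = ‖u (n + 1) - u n‖ := by
          rw [Complex.dist_eq, ← norm_neg]; ring_nf
      _ = ‖moeb (u n) (u (n + 1))‖
            * ‖1 - (starRingEnd ℂ) (u n) * u (n + 1)‖ := by
          rw [this, norm_mul]
      _ ≤ (qq k ^ n * ‖moeb (u 0) (u 1)‖) * 2 := by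
          apply mul_le_mul (hgeo n) (abs_one_sub_mul_le hk1.le (hub n) (hub (n+1)))
            (norm_nonneg _)
          exact mul_nonneg (pow_nonneg (qq_nonneg k) n) (norm_nonneg _)
      _ = (2 * ‖moeb (u 0) (u 1)‖) * qq k ^ n := by ring
  have hcauchy : CauchySeq u :=
    cauchySeq_of_le_geometric (qq k) _ (qq_lt_one hk0 hk1) hdist
  obtain ⟨a, ha⟩ := cauchySeq_tendsto_of_complete hcauchy
  have hak : ‖a‖ ≤ k := by
    have hmem : a ∈ closedBall (0:ℂ) k := by
      apply Metric.isClosed_closedBall.mem_of_tendsto ha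
      filter_upwards with n
      simpa [Metric.mem_closedBall, Complex.dist_eq] using hub n
    simpa [Metric.mem_closedBall, Complex.dist_eq] using hmem
  have ha1 : ‖a‖ < 1 := lt_of_le_of_lt hak hk1
  have hconta : ContinuousAt f a :=
    (hd.differentiableAt (isOpen_ball.mem_nhds (mem_ball_abs.mpr ha1))).continuousAt
  have hfa : f a = a := by
    have T1 : Tendsto (fun n => f (u n)) atTop (𝓝 (f a)) := hconta.tendsto.comp ha
    have T2 : (fun n => f (u n)) = fun n => u (n + 1) := by
      funext n; rw [hu n]
    rw [T2] at T1
    have T3 : Tendsto (fun n => u (n + 1)) atTop (𝓝 a) :=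
      ha.comp (tendsto_add_atTop_nat 1)
    exact tendsto_nhds_unique T1 T3
  refine ⟨a, hak, hfa, ?_, ?_⟩
  · -- derivative bound
    have hda : DifferentiableAt ℂ f a :=
      hd.differentiableAt (isOpen_ball.mem_nhds (mem_ball_abs.mpr ha1))
    have Ts : Tendsto (slope f a) (𝓝[≠] a) (𝓝 (deriv f a)) :=
      hasDerivAt_iff_tendsto_slope.mp hda.hasDerivAt
    have TsAbs : Tendsto (fun y => ‖slope f a y‖) (𝓝[≠] a)
        (𝓝 (‖deriv f a‖)) :=
      (continuous_norm.continuousAt).tendsto.comp Ts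
    set B : ℂ → ℝ := fun y => qq k *
      (‖1 - (starRingEnd ℂ) a * f y‖ / ‖1 - (starRingEnd ℂ) a * y‖)
      with hBdef
    have hdenA : (1:ℂ) - (starRingEnd ℂ) a * a ≠ 0 := by
      apply denom_ne; nlinarith [norm_nonneg a]
    have hBcont : ContinuousAt B a := by
      apply ContinuousAt.mul continuousAt_const
      apply ContinuousAt.div
      · exact continuous_norm.continuousAt.comp
          (continuousAt_const.sub (continuousAt_const.mul hconta))
      · exact continuous_norm.continuousAt.comp
          (continuousAt_const.sub (continuousAt_const.mul continuousAt_id))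
      · exact norm_ne_zero_iff.mpr hdenA
    have hBa : B a = qq k := by
      rw [hBdef]; simp only [hfa]
      rw [div_self (norm_ne_zero_iff.mpr hdenA), mul_one]
    have TB : Tendsto B (𝓝[≠] a) (𝓝 (qq k)) := by
      rw [← hBa]
      exact hBcont.tendsto.mono_left nhdsWithin_le_nhds
    have Ev : ∀ᶠ y in 𝓝[≠] a, ‖slope f a y‖ ≤ B y := by
      have hball : ∀ᶠ y in 𝓝 a, y ∈ ball (0:ℂ) 1 :=
        isOpen_ball.eventually_mem (mem_ball_abs.mpr ha1)
      filter_upwards [self_mem_nhdsWithin, hball.filter_mono nhdsWithin_le_nhds]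
        with y hyne hy1
      have hy1' : ‖y‖ < 1 := mem_ball_abs.mp hy1
      have hfy : ‖f y‖ ≤ k := hmap y hy1
      have SP := schwarzPick hk0 hk1 hd hmap hak hy1'
      rw [hfa] at SP
      have hd1 : (0:ℝ) < ‖1 - (starRingEnd ℂ) a * f y‖ := by
        apply norm_pos_iff.mpr
        apply denom_ne
        nlinarith [norm_nonneg a, norm_nonneg (f y)]
      have hd2 : (0:ℝ) < ‖1 - (starRingEnd ℂ) a * y‖ := by
        apply norm_pos_iff.mpr
        apply denom_ne
        nlinarith [norm_nonneg a, norm_nonneg y]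
      have hs : (0:ℝ) < ‖y - a‖ := by
        rw [norm_pos_iff, sub_ne_zero]
        exact hyne
      rw [moeb_def, moeb_def, norm_div, norm_div] at SP
      have hslope : ‖slope f a y‖
          = ‖f y - a‖ / ‖y - a‖ := by
        rw [slope_def_field, hfa, norm_div]
      rw [hslope, hBdef]
      rw [div_le_iff₀ hs]
      rw [div_le_iff₀ hd1] at SP
      calc ‖f y - a‖
          ≤ qq k * (‖y - a‖ / ‖1 - (starRingEnd ℂ) a * y‖)
              * ‖1 - (starRingEnd ℂ) a * f y‖ := SP
        _ = qq k * (‖1 - (starRingEnd ℂ) a * f y‖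
              / ‖1 - (starRingEnd ℂ) a * y‖) * ‖y - a‖ := by
            ring
    have hle : ‖deriv f a‖ ≤ qq k := le_of_tendsto_of_tendsto TsAbs TB Ev
    exact lt_of_le_of_lt hle (qq_lt_one hk0 hk1)
  · -- uniqueness
    intro w hw hfw
    have SP := schwarzPick hk0 hk1 hd hmap hak hw
    rw [hfa, hfw] at SP
    have h0 : ‖moeb a w‖ = 0 := by
      have := qq_lt_one hk0 hk1
      nlinarith [norm_nonneg (moeb a w)]
    have : moeb a w = 0 := by
      rwa [norm_eq_zero] at h0
    rw [moeb_def] at this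
    have hne : (1:ℂ) - (starRingEnd ℂ) a * w ≠ 0 := by
      apply denom_ne
      nlinarith [norm_nonneg a, norm_nonneg w, hw, ha1]
    rw [div_eq_zero_iff] at this
    rcases this with h | h
    · exact (sub_eq_zero.mp h)
    · exact absurd h hne

end Stmt3Aux


open Stmt3Aux

/-- Rouché-type localization: `F` has exactly one (simple) zero in the disk
around `λ* = iω - F(iω)/F'(iω)`. -/
theorem stmt_3 (F ρ : ℂ → ℂ) (ω R₁ R M : ℝ)
    (hR₁ : 0 < R₁) (hR : 0 < R)
    (hF : AnalyticOnNhd ℂ F (closedBall (Complex.I * (ω : ℂ)) R₁))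
    (hρ : AnalyticOnNhd ℂ ρ (closedBall (Complex.I * (ω : ℂ)) R₁))
    (hDer : deriv F (Complex.I * (ω : ℂ)) ≠ 0)
    (hexp : ∀ z ∈ closedBall (Complex.I * (ω : ℂ)) R₁,
      F z = F (Complex.I * (ω : ℂ))
        + (z - Complex.I * (ω : ℂ)) * deriv F (Complex.I * (ω : ℂ))
        + (z - Complex.I * (ω : ℂ)) ^ 2 * ρ z)
    (hρM : ∀ z ∈ closedBall (Complex.I * (ω : ℂ)) R₁, ‖ρ z‖ ≤ M)
    (hM0 : 0 < M)
    (hM : M < (‖deriv F (Complex.I * (ω : ℂ))‖) ^ 2 /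
      (4 * ‖F (Complex.I * (ω : ℂ))‖))
    (lamStar : ℂ) (b c : ℝ)
    (hlam : lamStar = Complex.I * (ω : ℂ)
      - F (Complex.I * (ω : ℂ)) / deriv F (Complex.I * (ω : ℂ)))
    (hc : c = ‖F (Complex.I * (ω : ℂ)) / deriv F (Complex.I * (ω : ℂ))‖)
    (hb : b = Real.sqrt (‖deriv F (Complex.I * (ω : ℂ))‖ / (4 * M)))
    (hsq1 : b - Real.sqrt (b ^ 2 - c) < Real.sqrt R)
    (hsq2 : Real.sqrt R < b + Real.sqrt (b ^ 2 - c))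
    (hsub : closedBall lamStar R ⊆ closedBall (Complex.I * (ω : ℂ)) R₁) :
    ∃ z₀ ∈ ball lamStar R, F z₀ = 0 ∧ deriv F z₀ ≠ 0 ∧
      ∀ z ∈ ball lamStar R, F z = 0 → z = z₀ := by
  set A : ℂ := Complex.I * (ω : ℂ) with hAdef
  set F1 : ℂ := deriv F A with hF1def
  set F0 : ℂ := F A with hF0def
  have haF1 : 0 < ‖F1‖ := norm_pos_iff.mpr hDer
  have hF0ne : F0 ≠ 0 := by
    intro h0
    rw [h0] at hM
    simp only [norm_zero, mul_zero, div_zero] at hM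
    linarith
  have haF0 : 0 < ‖F0‖ := norm_pos_iff.mpr hF0ne
  have hc' : c = ‖F0‖ / ‖F1‖ := by rw [hc, norm_div]
  have hc0 : 0 < c := by rw [hc']; positivity
  have hb2 : b ^ 2 = ‖F1‖ / (4 * M) := by
    rw [hb]; exact Real.sq_sqrt (by positivity)
  have hb0 : 0 < b := by
    rw [hb]; apply Real.sqrt_pos.mpr; positivity
  have hbc : c < b ^ 2 := by
    have key : M * (4 * ‖F0‖) < ‖F1‖ ^ 2 :=
      (lt_div_iff₀ (by positivity)).mp hM
    rw [hc', hb2, div_lt_div_iff₀ haF1 (by positivity)]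
    nlinarith
  have hR4 : R + c < 2 * b * Real.sqrt R := by
    have hsR : Real.sqrt R ^ 2 = R := Real.sq_sqrt hR.le
    have hs := Real.sq_sqrt (by linarith : (0:ℝ) ≤ b ^ 2 - c)
    have h1 : (Real.sqrt R - b) ^ 2 < b ^ 2 - c := by
      nlinarith [mul_pos (by linarith : (0:ℝ) < Real.sqrt (b^2-c) - (Real.sqrt R - b))
        (by linarith : (0:ℝ) < Real.sqrt (b^2-c) + (Real.sqrt R - b))]
    nlinarith
  have hKR : M * (R + c) ^ 2 < ‖F1‖ * R := by
    have h4Mb : 4 * M * b ^ 2 = ‖F1‖ := by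
      rw [hb2]; field_simp
    have h2 : (R + c) ^ 2 < (2 * b * Real.sqrt R) ^ 2 :=
      pow_lt_pow_left₀ hR4 (by linarith) (by norm_num)
    have hsR : Real.sqrt R ^ 2 = R := Real.sq_sqrt hR.le
    nlinarith
  set k : ℝ := M * (R + c) ^ 2 / (‖F1‖ * R) with hkdef
  have hk0 : 0 ≤ k := by positivity
  have hk1 : k < 1 := (div_lt_one (by positivity)).mpr hKR
  have hcabs : ‖lamStar - A‖ = c := by
    have e : lamStar - A = -(F0 / F1) := by rw [hlam]; ring
    rw [e, norm_neg, ← hc]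
  have hmemR : ∀ w : ℂ, ‖w‖ ≤ 1 → (lamStar + (R:ℂ) * w) ∈ closedBall lamStar R := by
    intro w hw
    rw [Metric.mem_closedBall, Complex.dist_eq]
    have e : lamStar + (R:ℂ) * w - lamStar = (R:ℂ) * w := by ring
    rw [e, norm_mul, Complex.norm_real, Real.norm_eq_abs, abs_of_pos hR]
    nlinarith
  have hmemR₁ : ∀ w : ℂ, ‖w‖ ≤ 1 → (lamStar + (R:ℂ) * w) ∈ closedBall A R₁ :=
    fun w hw => hsub (hmemR w hw)
  have habszA : ∀ w : ℂ, ‖w‖ ≤ 1 → ‖lamStar + (R:ℂ) * w - A‖ ≤ R + c := by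
    intro w hw
    have e : lamStar + (R:ℂ) * w - A = (lamStar - A) + (R:ℂ) * w := by ring
    rw [e]
    calc ‖(lamStar - A) + (R:ℂ) * w‖
        ≤ ‖lamStar - A‖ + ‖(R:ℂ) * w‖ := norm_add_le _ _
      _ ≤ R + c := by
          rw [hcabs, norm_mul, Complex.norm_real, Real.norm_eq_abs, abs_of_pos hR]
          nlinarith
  have hRne : ((R:ℂ)) ≠ 0 := Complex.ofReal_ne_zero.mpr hR.ne'
  have hF1R : F1 * (R:ℂ) ≠ 0 := mul_ne_zero hDer hRne
  set f : ℂ → ℂ := fun w => -((lamStar + (R:ℂ) * w - A) ^ 2 * ρ (lamStar + (R:ℂ) * w)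
    / (F1 * (R:ℂ))) with hfdef
  have hmapf : ∀ w ∈ ball (0:ℂ) 1, ‖f w‖ ≤ k := by
    intro w hw
    have hw1 : ‖w‖ ≤ 1 := le_of_lt (mem_ball_abs.mp hw)
    have h1 := habszA w hw1
    have h2 := hρM _ (hmemR₁ w hw1)
    rw [hfdef]
    simp only
    rw [norm_neg, norm_div, norm_mul, norm_pow, norm_mul, Complex.norm_real, Real.norm_eq_abs,
      abs_of_pos hR, hkdef]
    apply div_le_div_of_nonneg_right ?_ (by positivity)
    calc ‖lamStar + (R:ℂ) * w - A‖ ^ 2 * ‖ρ (lamStar + (R:ℂ) * w)‖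
        ≤ (R + c) ^ 2 * M := mul_le_mul (pow_le_pow_left₀ (norm_nonneg _) h1 2) h2
          (norm_nonneg _) (by positivity)
      _ = M * (R + c) ^ 2 := by ring
  have hdf : DifferentiableOn ℂ f (ball 0 1) := by
    intro w hw
    apply DifferentiableAt.differentiableWithinAt
    have hw1 : ‖w‖ ≤ 1 := le_of_lt (mem_ball_abs.mp hw)
    have hρa : AnalyticAt ℂ ρ (lamStar + (R:ℂ) * w) := hρ _ (hmemR₁ w hw1)
    have d1 : DifferentiableAt ℂ (fun w : ℂ => lamStar + (R:ℂ) * w) w := by fun_prop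
    have d2 : DifferentiableAt ℂ (fun w : ℂ => ρ (lamStar + (R:ℂ) * w)) w :=
      (hρa.differentiableAt).comp w d1
    have d3 : DifferentiableAt ℂ (fun w : ℂ => (lamStar + (R:ℂ) * w - A) ^ 2) w := by fun_prop
    rw [hfdef]
    exact ((d3.mul d2).div_const _).neg
  obtain ⟨a, hak, hfa, hdfa, huniq⟩ := Stmt3Aux.diskFixedPoint hk0 hk1 hdf hmapf
  rw [hfdef] at hfa
  simp only at hfa
  set z₀ : ℂ := lamStar + (R:ℂ) * a with hz₀def
  have hz₀ball : z₀ ∈ ball lamStar R := by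
    rw [Metric.mem_ball, Complex.dist_eq]
    have e : z₀ - lamStar = (R:ℂ) * a := by rw [hz₀def]; ring
    rw [e, norm_mul, Complex.norm_real, Real.norm_eq_abs, abs_of_pos hR]
    calc R * ‖a‖ ≤ R * k := mul_le_mul_of_nonneg_left hak hR.le
      _ < R := mul_lt_of_lt_one_right hR hk1
  have hz₀R₁ : z₀ ∈ closedBall A R₁ := hsub (ball_subset_closedBall hz₀ball)
  have e1 : (z₀ - A) ^ 2 * ρ z₀ = -a * (F1 * (R:ℂ)) := by
    rw [← hfa]; field_simp
  have hlamF1 : lamStar * F1 = A * F1 - F0 := by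
    rw [hlam, sub_mul, div_mul_cancel₀ _ hDer]
  have hFz₀ : F z₀ = 0 := by
    rw [hexp z₀ hz₀R₁, e1, hz₀def]
    linear_combination hlamF1
  have hρz₀ : AnalyticAt ℂ ρ z₀ := hρ _ hz₀R₁
  have hdh : DifferentiableAt ℂ (fun z : ℂ => (z - A) ^ 2 * ρ z) z₀ :=
    ((differentiableAt_id.sub (differentiableAt_const A)).pow 2).mul hρz₀.differentiableAt
  set D : ℂ := deriv (fun z : ℂ => (z - A) ^ 2 * ρ z) z₀ with hDdef
  have hhD : HasDerivAt (fun z : ℂ => (z - A) ^ 2 * ρ z) D z₀ := hdh.hasDerivAt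
  have hG : HasDerivAt (fun z : ℂ => F0 + (z - A) * F1 + (z - A) ^ 2 * ρ z) (1 * F1 + D) z₀ := by
    apply HasDerivAt.add _ hhD
    exact (((hasDerivAt_id z₀).sub_const A).mul_const F1).const_add F0
  have hFeq : F =ᶠ[𝓝 z₀] fun z => F0 + (z - A) * F1 + (z - A) ^ 2 * ρ z := by
    filter_upwards [isOpen_ball.mem_nhds hz₀ball] with z hz
    exact hexp z (hsub (ball_subset_closedBall hz))
  have hderivF : deriv F z₀ = 1 * F1 + D := by
    rw [hFeq.deriv_eq]; exact hG.deriv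
  have haff : HasDerivAt (fun w : ℂ => lamStar + (R:ℂ) * w) ((R:ℂ) * 1) a :=
    (((hasDerivAt_id a).const_mul (R:ℂ))).const_add lamStar
  have hhD' : HasDerivAt (fun z : ℂ => (z - A) ^ 2 * ρ z) D (lamStar + (R:ℂ) * a) := by
    rw [← hz₀def]; exact hhD
  have hcomp : HasDerivAt (fun w : ℂ => (lamStar + (R:ℂ) * w - A) ^ 2
      * ρ (lamStar + (R:ℂ) * w)) (D * ((R:ℂ) * 1)) a :=
    HasDerivAt.comp (h₂ := fun z : ℂ => (z - A) ^ 2 * ρ z) a hhD' haff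
  have hfd : HasDerivAt f (-(D * ((R:ℂ) * 1) / (F1 * (R:ℂ)))) a := by
    rw [hfdef]; exact (hcomp.div_const _).neg
  have hDF1 : ‖D / F1‖ < 1 := by
    have e : -(D * ((R:ℂ) * 1) / (F1 * (R:ℂ))) = -(D / F1) := by
      field_simp
    rw [hfd.deriv, e, norm_neg] at hdfa
    exact hdfa
  refine ⟨z₀, hz₀ball, hFz₀, ?_, ?_⟩
  · intro h0
    rw [hderivF] at h0
    have hD : D = -F1 := by linear_combination h0
    rw [hD, neg_div, div_self hDer, norm_neg, norm_one] at hDF1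
    linarith
  · intro z hz hFz
    have hzR₁ : z ∈ closedBall A R₁ := hsub (ball_subset_closedBall hz)
    set w : ℂ := (z - lamStar) / (R:ℂ) with hwdef
    have hzw : lamStar + (R:ℂ) * w = z := by rw [hwdef]; field_simp; ring
    have hw1 : ‖w‖ < 1 := by
      rw [hwdef, norm_div, Complex.norm_real, Real.norm_eq_abs, abs_of_pos hR, div_lt_one hR]
      rw [Metric.mem_ball, Complex.dist_eq] at hz
      exact hz
    have hfw : f w = w := by
      have e2 : (z - A) ^ 2 * ρ z = -(F0 + (z - A) * F1) := by
        have h3 := hexp z hzR₁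
        rw [hFz] at h3
        linear_combination -h3
      rw [hfdef]
      show -((lamStar + (R:ℂ) * w - A) ^ 2 * ρ (lamStar + (R:ℂ) * w) / (F1 * (R:ℂ))) = w
      rw [hzw, hwdef, e2, neg_div, neg_neg, div_eq_div_iff hF1R hRne]
      linear_combination (R:ℂ) * hlamF1
    have hwa : w = a := huniq w hw1 hfw
    calc z = lamStar + (R:ℂ) * w := hzw.symm
      _ = lamStar + (R:ℂ) * a := by rw [hwa]
      _ = z₀ := by rw [← hz₀def]
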